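/- arXiv:1009.5176 — 5 statements merged into one kernel-verified Lean document; each statement's English description precedes it below -/
import Mathlib

section
/- Let P be an H-group and P' a saturated sub-H-group of P (i.e., P' is a union of path components of P). Then for every g ∈ P, the set of path components of the left coset gP' has the same cardinality as the set of path components of P'. -/
open ContinuousMap

universe u v

/-- An H-group: a pointed space with continuous multiplication, homotopy inverse and the
constant map as homotopy identity, satisfying the H-group axioms up to pointed homotopy. -/
structure HGroup (P : Type u) [TopologicalSpace P] where
  pt : P
  mul : C(P × P, P)
  inv : C(P, P)
  mul_pt : mul (pt, pt) = pt
  inv_pt : inv pt = pt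
  left_id : HomotopicRel ⟨fun g => mul (pt, g), by fun_prop⟩ (ContinuousMap.id P) {pt}
  right_id : HomotopicRel ⟨fun g => mul (g, pt), by fun_prop⟩ (ContinuousMap.id P) {pt}
  left_inv : HomotopicRel ⟨fun g => mul (inv g, g), by fun_prop⟩ (const P pt) {pt}
  right_inv : HomotopicRel ⟨fun g => mul (g, inv g), by fun_prop⟩ (const P pt) {pt}
  assoc : HomotopicRel ⟨fun p : P × P × P => mul (mul (p.1, p.2.1), p.2.2), by fun_prop⟩
      ⟨fun p : P × P × P => mul (p.1, mul (p.2.1, p.2.2)), by fun_prop⟩ {(pt, pt, pt)}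

/-- `Jtn S g` : `g` homotopically belongs to `S`, i.e. there is a path in the ambient
space from `g` to a point of `S`. -/
def Jtn {P : Type u} [TopologicalSpace P] (S : Set P) (g : P) : Prop := ∃ s ∈ S, Joined g s

/-- The class of `g` in `π₀`. -/
def pc {P : Type u} [TopologicalSpace P] (g : P) : ZerothHomotopy P :=
  Quotient.mk (pathSetoid P) g

namespace HGroup
variable {P : Type u} [TopologicalSpace P]

/-- The left coset `g·S = {g' | η(g)·g' ∈̃ S}`. -/
def lcoset (H : HGroup P) (g : P) (S : Set P) : Set P :=
  {g' | Jtn S (H.mul (H.inv g, g'))}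

/-- The right coset `S·g = {g' | g'·η(g) ∈̃ S}`. -/
def rcoset (H : HGroup P) (S : Set P) (g : P) : Set P :=
  {g' | Jtn S (H.mul (g', H.inv g))}

/-- The pointwise product of two subsets. -/
def mulSet (H : HGroup P) (A B : Set P) : Set P := {p | ∃ a ∈ A, ∃ b ∈ B, p = H.mul (a, b)}

end HGroup

/-- A subset is saturated if it is a union of path components of the ambient space. -/
def Saturated {P : Type u} [TopologicalSpace P] (A : Set P) : Prop :=
  ∀ x ∈ A, ∀ y, Joined x y → y ∈ A

/-- A sub-H-group: a pointed subspace which is itself an H-group such that the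
inclusion is an H-homomorphism (via pointed homotopies). -/
structure SubHGroup {P : Type u} [TopologicalSpace P] (H : HGroup P) where
  carrier : Set P
  struct : HGroup carrier
  pt_val : (struct.pt : P) = H.pt
  incl_mul : HomotopicRel
    ⟨fun p : carrier × carrier => (struct.mul p : P), by fun_prop⟩
    ⟨fun p : carrier × carrier => H.mul (p.1, p.2), by fun_prop⟩
    {(struct.pt, struct.pt)}
  incl_inv : HomotopicRel
    ⟨fun x : carrier => (struct.inv x : P), by fun_prop⟩
    ⟨fun x : carrier => H.inv x, by fun_prop⟩
    {struct.pt}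

/-- A sub-H-group is normal if `g·n·g⁻¹` homotopically belongs to it for all `g`, `n`. -/
def SubHGroup.Normal {P : Type u} [TopologicalSpace P] {H : HGroup P}
    (N : SubHGroup H) : Prop :=
  ∀ g : P, ∀ n ∈ N.carrier, Jtn N.carrier (H.mul (H.mul (g, n), H.inv g))

/-- The set of left cosets of `S` in `P`. -/
def Cosets {P : Type u} [TopologicalSpace P] (H : HGroup P) (S : Set P) :=
  {T : Set P // ∃ g : P, T = H.lcoset g S}

/-- The left coset of `S` represented by `g`, as an element of `Cosets H S`. -/
def cst {P : Type u} [TopologicalSpace P] (H : HGroup P) (S : Set P) (g : P) : Cosets H S :=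
  ⟨H.lcoset g S, g, rfl⟩

/-- The coset equivalence relation: `g₁ ∼ g₂` iff `g₁·η(g₂) ∈̃ S`. -/
def cosetRel {P : Type u} [TopologicalSpace P] (H : HGroup P) (S : Set P)
    (g₁ g₂ : P) : Prop :=
  Jtn S (H.mul (g₁, H.inv g₂))

section Aux
variable {P : Type u} [TopologicalSpace P]

lemma joined_map {X Y : Type*} [TopologicalSpace X] [TopologicalSpace Y] {x y : X}
    (h : Joined x y) {f : X → Y} (hf : Continuous f) : Joined (f x) (f y) :=
  ⟨h.somePath.map hf⟩

lemma joined_of_homotopicRel {X Y : Type*} [TopologicalSpace X] [TopologicalSpace Y]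
    {f g : C(X, Y)} {S : Set X} (h : ContinuousMap.HomotopicRel f g S) (x : X) :
    Joined (f x) (g x) := by
  obtain ⟨Ht⟩ := h
  exact ⟨⟨⟨fun t => Ht (t, x),
    Ht.toHomotopy.continuous.comp (by fun_prop)⟩, Ht.apply_zero x, Ht.apply_one x⟩⟩

lemma saturated_joinedIn {A : Set P} (hA : Saturated A) {x y : P} (hx : x ∈ A)
    (h : Joined x y) : JoinedIn A x y := by
  obtain ⟨γ⟩ := h
  refine ⟨γ, fun t => hA x hx (γ t) ?_⟩
  exact ⟨(γ.truncate 0 t).cast (by simp [min_eq_left t.2.1]) (γ.extend_extends' t).symm⟩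

lemma saturated_joined_subtype {A : Set P} (hA : Saturated A) {x y : A}
    (h : Joined (x : P) (y : P)) : Joined x y := by
  have := (saturated_joinedIn hA x.2 h).joined_subtype
  simpa using this

lemma lcoset_saturated (H : HGroup P) (g : P) (S : Set P) :
    Saturated (H.lcoset g S) := by
  rintro x ⟨s, hs, hj⟩ y hxy
  exact ⟨s, hs, ((joined_map hxy (by fun_prop :
    Continuous fun z : P => H.mul (H.inv g, z))).symm).trans hj⟩

end Aux

/-- For a saturated sub-H-group `P'` and any `g`, the set of path components of the left
coset `gP'` has the same cardinality as the set of path components of `P'`. -/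
theorem stmt_3 {P : Type u} [TopologicalSpace P] (H : HGroup P) (P' : SubHGroup H)
    (hsat : Saturated P'.carrier) (g : P) :
    Cardinal.mk (ZerothHomotopy ↥(H.lcoset g P'.carrier)) =
      Cardinal.mk (ZerothHomotopy ↥P'.carrier) :=
  by
  -- ambient-space path facts from the H-group axioms
  have passoc : ∀ a b c : P,
      Joined (H.mul (H.mul (a, b), c)) (H.mul (a, H.mul (b, c))) := fun a b c =>
    joined_of_homotopicRel H.assoc (a, b, c)
  have pLid : ∀ x : P, Joined (H.mul (H.pt, x)) x := fun x =>
    joined_of_homotopicRel H.left_id x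
  have pLinv : Joined (H.mul (H.inv g, g)) H.pt :=
    joined_of_homotopicRel H.left_inv g
  have pRinv : Joined (H.mul (g, H.inv g)) H.pt :=
    joined_of_homotopicRel H.right_inv g
  have claim1 : ∀ x : P, Joined (H.mul (H.inv g, H.mul (g, x))) x := fun x => by
    refine ((passoc (H.inv g) g x).symm.trans ?_).trans (pLid x)
    exact joined_map pLinv (by fun_prop : Continuous fun a : P => H.mul (a, x))
  have claim2 : ∀ x : P, Joined (H.mul (g, H.mul (H.inv g, x))) x := fun x => by
    refine ((passoc g (H.inv g) x).symm.trans ?_).trans (pLid x)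
    exact joined_map pRinv (by fun_prop : Continuous fun a : P => H.mul (a, x))
  have hsat' := lcoset_saturated H g P'.carrier
  -- the two maps
  have hGmem : ∀ x : P'.carrier, H.mul (g, (x : P)) ∈ H.lcoset g P'.carrier :=
    fun x => ⟨x, x.2, claim1 x⟩
  have hFmem : ∀ y : H.lcoset g P'.carrier, H.mul (H.inv g, (y : P)) ∈ P'.carrier := by
    rintro ⟨y, s, hs, hj⟩
    exact hsat s hs _ hj.symm
  set Fm : H.lcoset g P'.carrier → P'.carrier :=
    fun y => ⟨H.mul (H.inv g, (y : P)), hFmem y⟩ with hFm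
  set Gm : P'.carrier → H.lcoset g P'.carrier :=
    fun x => ⟨H.mul (g, (x : P)), hGmem x⟩ with hGm
  have hFrel : ∀ a b : H.lcoset g P'.carrier, Joined a b → Joined (Fm a) (Fm b) := by
    intro a b hab
    refine saturated_joined_subtype hsat ?_
    exact joined_map (joined_map hab continuous_subtype_val)
      (by fun_prop : Continuous fun z : P => H.mul (H.inv g, z))
  have hGrel : ∀ a b : P'.carrier, Joined a b → Joined (Gm a) (Gm b) := by
    intro a b hab
    refine saturated_joined_subtype hsat' ?_
    exact joined_map (joined_map hab continuous_subtype_val)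
      (by fun_prop : Continuous fun z : P => H.mul (g, z))
  refine Cardinal.mk_congr ?_
  refine ⟨Quotient.map Fm hFrel, Quotient.map Gm hGrel, ?_, ?_⟩
  · refine Quotient.ind fun a => ?_
    refine Quotient.sound ?_
    exact saturated_joined_subtype hsat' (claim2 (a : P))
  · refine Quotient.ind fun a => ?_
    refine Quotient.sound ?_
    exact saturated_joined_subtype hsat (claim1 (a : P))
end

section
/- Let P be an H-group and let A be a saturated subset of P containing the base point which is closed under the multiplication μ and the homotopy inverse η of P (i.e., μ(A × A) ⊆ A and η(A) ⊆ A). Then A, with the restricted structure maps, is a sub-H-group of P; in particular the inclusion A → P is a monomorphism in the pointed homotopy category. -/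
open ContinuousMap

universe u v

section Aux

variable {P : Type u} [TopologicalSpace P]

/-- The inclusion of a subset as a continuous map. -/
def inclCM (A : Set P) : C(↥A, P) := ⟨Subtype.val, continuous_subtype_val⟩

/-- Precomposition preserves relative homotopy (with an adjusted set). -/
lemma precompHR {X : Type v} [TopologicalSpace X] {f₀ f₁ : C(P, P)} {S : Set P}
    (h : HomotopicRel f₀ f₁ S) (k : C(X, P)) (T : Set X)
    (hT : ∀ x ∈ T, k x ∈ S) : HomotopicRel (f₀.comp k) (f₁.comp k) T := by
  obtain ⟨K⟩ := h
  exact ⟨{ toFun := fun p => K (p.1, k p.2)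
           continuous_toFun := K.continuous.comp (by fun_prop)
           map_zero_left := fun x => K.apply_zero _
           map_one_left := fun x => K.apply_one _
           prop' := fun t x hx => K.prop t _ (hT x hx) }⟩

/-- Precomposition, version for maps from a product space. -/
lemma precompHR' {X : Type v} [TopologicalSpace X] {Q : Type u} [TopologicalSpace Q]
    {f₀ f₁ : C(Q, P)} {S : Set Q}
    (h : HomotopicRel f₀ f₁ S) (k : C(X, Q)) (T : Set X)
    (hT : ∀ x ∈ T, k x ∈ S) : HomotopicRel (f₀.comp k) (f₁.comp k) T := by
  obtain ⟨K⟩ := h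
  exact ⟨{ toFun := fun p => K (p.1, k p.2)
           continuous_toFun := K.continuous.comp (by fun_prop)
           map_zero_left := fun x => K.apply_zero _
           map_one_left := fun x => K.apply_one _
           prop' := fun t x hx => K.prop t _ (hT x hx) }⟩

/-- For a saturated subset `A`, homotopies (rel a set) in `P` between maps landing
in `A` lift to homotopies in `A`; i.e. the inclusion is monic up to homotopy. -/
lemma satLift {A : Set P} (hA : Saturated A) {X : Type v} [TopologicalSpace X]
    (h₁ h₂ : C(X, ↥A)) (S : Set X)
    (h : HomotopicRel ((inclCM A).comp h₁) ((inclCM A).comp h₂) S) :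
    HomotopicRel h₁ h₂ S := by
  obtain ⟨K⟩ := h
  have mem : ∀ p : unitInterval × X, K p ∈ A := by
    intro p
    refine hA (h₁ p.2) (h₁ p.2).2 (K p)
      ⟨⟨⟨fun s => K (⟨s.1 * p.1.1, unitInterval.mul_mem s.2 p.1.2⟩, p.2),
        K.continuous.comp ((Continuous.subtype_mk
          (continuous_subtype_val.mul continuous_const) _).prodMk continuous_const)⟩,
        ?_, ?_⟩⟩
    · have : (⟨(0:unitInterval).1 * p.1.1, unitInterval.mul_mem (0:unitInterval).2 p.1.2⟩ :
          unitInterval) = 0 := by ext; simp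
      show K (_, p.2) = _
      rw [this]
      exact K.apply_zero p.2
    · have : (⟨(1:unitInterval).1 * p.1.1, unitInterval.mul_mem (1:unitInterval).2 p.1.2⟩ :
          unitInterval) = p.1 := by ext; simp
      show K (_, p.2) = _
      rw [this]
  exact ⟨{ toFun := fun p => ⟨K p, mem p⟩
           continuous_toFun := (K.continuous).subtype_mk _
           map_zero_left := fun x => Subtype.ext (K.apply_zero x)
           map_one_left := fun x => Subtype.ext (K.apply_one x)
           prop' := fun t x hx => Subtype.ext (K.prop t x hx) }⟩

/-- The restricted H-group structure on a saturated subset. -/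
def HGroup.restrict (H : HGroup P) (A : Set P) (hA : Saturated A) (hpt : H.pt ∈ A)
    (hmul : ∀ x ∈ A, ∀ y ∈ A, H.mul (x, y) ∈ A) (hinv : ∀ x ∈ A, H.inv x ∈ A) :
    HGroup ↥A where
  pt := ⟨H.pt, hpt⟩
  mul := ⟨fun p => ⟨H.mul (p.1.1, p.2.1), hmul _ p.1.2 _ p.2.2⟩, by fun_prop⟩
  inv := ⟨fun x => ⟨H.inv x, hinv _ x.2⟩, by fun_prop⟩
  mul_pt := Subtype.ext H.mul_pt
  inv_pt := Subtype.ext H.inv_pt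
  left_id := satLift hA _ _ _ <| precompHR H.left_id (inclCM A) _
    (by rintro x rfl; rfl)
  right_id := satLift hA _ _ _ <| precompHR H.right_id (inclCM A) _
    (by rintro x rfl; rfl)
  left_inv := satLift hA _ _ _ <| precompHR H.left_inv (inclCM A) _
    (by rintro x rfl; rfl)
  right_inv := satLift hA _ _ _ <| precompHR H.right_inv (inclCM A) _
    (by rintro x rfl; rfl)
  assoc := satLift hA _ _ _ <| precompHR' H.assoc
    ⟨fun p : ↥A × ↥A × ↥A => ((p.1 : P), (p.2.1 : P), (p.2.2 : P)), by fun_prop⟩ _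
    (by rintro x rfl; rfl)

end Aux

/-- A saturated subset of an H-group containing the base point and closed under the
multiplication and the homotopy inverse is a sub-H-group (with the restricted structure
maps); in particular the inclusion is a monomorphism in the pointed homotopy category. -/
theorem stmt_6 {P : Type u} [TopologicalSpace P] (H : HGroup P) (A : Set P)
    (hA : Saturated A) (hpt : H.pt ∈ A)
    (hmul : ∀ x ∈ A, ∀ y ∈ A, H.mul (x, y) ∈ A) (hinv : ∀ x ∈ A, H.inv x ∈ A) :
    ∃ S : SubHGroup H, S.carrier = A ∧
      (∀ p : ↥S.carrier × ↥S.carrier, (S.struct.mul p : P) = H.mul (p.1, p.2)) ∧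
      (∀ x : ↥S.carrier, (S.struct.inv x : P) = H.inv x) ∧
      ∀ (Z : Type u) [TopologicalSpace Z] (z : Z) (h₁ h₂ : C(Z, ↥S.carrier)),
        HomotopicRel ((⟨Subtype.val, continuous_subtype_val⟩ : C(↥S.carrier, P)).comp h₁)
          ((⟨Subtype.val, continuous_subtype_val⟩ : C(↥S.carrier, P)).comp h₂) {z} →
        HomotopicRel h₁ h₂ {z} := by
  refine ⟨⟨A, H.restrict A hA hpt hmul hinv, rfl,
    HomotopicRel.refl _, HomotopicRel.refl _⟩, rfl, fun p => rfl, fun x => rfl,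
    fun Z _ z h₁ h₂ h => satLift hA h₁ h₂ {z} h⟩
end

section
/- Let P be an H-group and P' a sub-H-group. The following are equivalent: (i) for all g₁, g₂ ∈ P, the saturation of the product set (g₁P')(g₂P') equals the coset (g₁·g₂)P'; (ii) for all g ∈ P, the left coset gP' equals the right coset P'g. -/
open ContinuousMap

universe u v

section Aux

variable {P : Type u} [TopologicalSpace P]

lemma homotopicRel_joined {X : Type*} {Y : Type*} [TopologicalSpace X] [TopologicalSpace Y]
    {f g : C(X, Y)} {S : Set X} (h : ContinuousMap.HomotopicRel f g S) (x : X) :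
    Joined (f x) (g x) := by
  obtain ⟨h⟩ := h
  exact ⟨⟨⟨fun t => h (t, x), by fun_prop⟩, h.apply_zero x, h.apply_one x⟩⟩

lemma joined_mul (H : HGroup P) {a a' b b' : P} (ha : Joined a a') (hb : Joined b b') :
    Joined (H.mul (a, b)) (H.mul (a', b')) := by
  obtain ⟨p⟩ := ha; obtain ⟨q⟩ := hb
  exact ⟨⟨⟨fun t => H.mul (p t, q t), by fun_prop⟩, by simp, by simp⟩⟩

lemma joined_inv (H : HGroup P) {a a' : P} (ha : Joined a a') :
    Joined (H.inv a) (H.inv a') := by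
  obtain ⟨p⟩ := ha
  exact ⟨⟨⟨fun t => H.inv (p t), by fun_prop⟩, by simp, by simp⟩⟩

/-- The group structure on `π₀(P)` induced by an H-group structure on `P`. -/
def pi0Group (H : HGroup P) : Group (ZerothHomotopy P) where
  mul := Quotient.map₂ (fun a b => H.mul (a, b)) (fun _ _ ha _ _ hb => joined_mul H ha hb)
  one := pc H.pt
  inv := Quotient.map (fun a => H.inv a) (fun _ _ h => joined_inv H h)
  mul_assoc a b c := Quotient.inductionOn₃ a b c fun x y z =>
    Quotient.sound (homotopicRel_joined H.assoc (x, y, z))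
  one_mul a := Quotient.inductionOn a fun x => Quotient.sound (homotopicRel_joined H.left_id x)
  mul_one a := Quotient.inductionOn a fun x => Quotient.sound (homotopicRel_joined H.right_id x)
  inv_mul_cancel a := Quotient.inductionOn a fun x =>
    Quotient.sound (homotopicRel_joined H.left_inv x)

lemma grp_aux {G : Type v} [Group G] (N : Set G) (h1 : (1 : G) ∈ N)
    (hmul : ∀ a ∈ N, ∀ b ∈ N, a * b ∈ N) :
    (∀ g₁ g₂ x : G, ((∃ n ∈ N, ∃ m ∈ N, x = g₁ * n * (g₂ * m)) ↔ (g₁ * g₂)⁻¹ * x ∈ N)) ↔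
      (∀ g x : G, g⁻¹ * x ∈ N ↔ x * g⁻¹ ∈ N) := by
  constructor
  · intro h g x
    have norm : ∀ a : G, ∀ n ∈ N, a * n * a⁻¹ ∈ N := by
      intro a n hn
      have := (h a a⁻¹ (a * n * (a⁻¹ * 1))).mp ⟨n, hn, 1, h1, rfl⟩
      have e : (a * a⁻¹)⁻¹ * (a * n * (a⁻¹ * 1)) = a * n * a⁻¹ := by group
      rwa [e] at this
    constructor
    · intro hx
      have := norm g _ hx
      have e : g * (g⁻¹ * x) * g⁻¹ = x * g⁻¹ := by group
      rwa [e] at this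
    · intro hx
      have := norm g⁻¹ _ hx
      have e : g⁻¹ * (x * g⁻¹) * g⁻¹⁻¹ = g⁻¹ * x := by group
      rwa [e] at this
  · intro h g₁ g₂ x
    have norm : ∀ a : G, ∀ n ∈ N, a * n * a⁻¹ ∈ N := by
      intro a n hn
      refine (h a (a * n)).mp ?_
      have e : a⁻¹ * (a * n) = n := by group
      rwa [e]
    constructor
    · rintro ⟨n, hn, m, hm, rfl⟩
      have h2 : g₂⁻¹ * n * g₂ ∈ N := by
        have := norm g₂⁻¹ n hn
        have e : g₂⁻¹ * n * g₂⁻¹⁻¹ = g₂⁻¹ * n * g₂ := by group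
        rwa [e] at this
      have := hmul _ h2 _ hm
      have e : (g₁ * g₂)⁻¹ * (g₁ * n * (g₂ * m)) = g₂⁻¹ * n * g₂ * m := by group
      rwa [e]
    · intro hk
      exact ⟨1, h1, (g₁ * g₂)⁻¹ * x, hk, by group⟩

end Aux

/-- For a sub-H-group `P'` of `P`, the saturation of `(g₁P')(g₂P')` equals `(g₁·g₂)P'`
for all `g₁, g₂` if and only if `gP' = P'g` for all `g`. -/

theorem stmt_8 {P : Type u} [TopologicalSpace P] (H : HGroup P) (P' : SubHGroup H) :
    (∀ g₁ g₂ : P,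
        {p : P | Jtn (H.mulSet (H.lcoset g₁ P'.carrier) (H.lcoset g₂ P'.carrier)) p} =
          H.lcoset (H.mul (g₁, g₂)) P'.carrier) ↔
    (∀ g : P, H.lcoset g P'.carrier = H.rcoset P'.carrier g) := by
  letI : Group (ZerothHomotopy P) := pi0Group H
  set N : Set (ZerothHomotopy P) := pc '' P'.carrier with hN
  have hpc_mul : ∀ a b : P, pc a * pc b = pc (H.mul (a, b)) := fun _ _ => rfl
  have hpc_inv : ∀ a : P, (pc a)⁻¹ = pc (H.inv a) := fun _ => rfl
  have hjtn : ∀ x : P, Jtn P'.carrier x ↔ pc x ∈ N := by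
    intro x
    constructor
    · rintro ⟨s, hs, hxs⟩
      exact ⟨s, hs, (Quotient.sound hxs).symm⟩
    · rintro ⟨s, hs, hsx⟩
      exact ⟨s, hs, (Quotient.exact hsx.symm : Joined x s)⟩
  have h1 : (1 : ZerothHomotopy P) ∈ N := by
    refine ⟨(P'.struct.pt : P), P'.struct.pt.2, ?_⟩
    show pc (P'.struct.pt : P) = pc H.pt
    rw [P'.pt_val]
  have hmulN : ∀ a ∈ N, ∀ b ∈ N, a * b ∈ N := by
    rintro _ ⟨a, ha, rfl⟩ _ ⟨b, hb, rfl⟩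
    rw [hpc_mul]
    refine (hjtn _).mp ?_
    refine ⟨(P'.struct.mul (⟨a, ha⟩, ⟨b, hb⟩) : P), (P'.struct.mul (⟨a, ha⟩, ⟨b, hb⟩)).2, ?_⟩
    exact (homotopicRel_joined P'.incl_mul (⟨a, ha⟩, ⟨b, hb⟩)).symm
  have hl : ∀ g p : P, p ∈ H.lcoset g P'.carrier ↔ (pc g)⁻¹ * pc p ∈ N := by
    intro g p
    rw [hpc_inv, hpc_mul]
    exact hjtn _
  have hr : ∀ g p : P, p ∈ H.rcoset P'.carrier g ↔ pc p * (pc g)⁻¹ ∈ N := by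
    intro g p
    rw [hpc_inv, hpc_mul]
    exact hjtn _
  have hsat : ∀ g₁ g₂ p : P,
      Jtn (H.mulSet (H.lcoset g₁ P'.carrier) (H.lcoset g₂ P'.carrier)) p ↔
        ∃ n ∈ N, ∃ m ∈ N, pc p = pc g₁ * n * (pc g₂ * m) := by
    intro g₁ g₂ p
    constructor
    · rintro ⟨s, ⟨a, ha, b, hb, rfl⟩, hps⟩
      refine ⟨(pc g₁)⁻¹ * pc a, (hl g₁ a).mp ha, (pc g₂)⁻¹ * pc b, (hl g₂ b).mp hb, ?_⟩
      have : pc p = pc (H.mul (a, b)) := Quotient.sound hps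
      rw [this, ← hpc_mul]
      group
    · rintro ⟨_, ⟨n₀, hn₀, rfl⟩, _, ⟨m₀, hm₀, rfl⟩, hx⟩
      refine ⟨H.mul (H.mul (g₁, n₀), H.mul (g₂, m₀)), ⟨H.mul (g₁, n₀), ?_, H.mul (g₂, m₀), ?_, rfl⟩, ?_⟩
      · refine (hl g₁ _).mpr ?_
        rw [← hpc_mul]
        simpa using ⟨n₀, hn₀, rfl⟩
      · refine (hl g₂ _).mpr ?_
        rw [← hpc_mul]
        simpa using ⟨m₀, hm₀, rfl⟩
      · have h' : pc p = pc (H.mul (H.mul (g₁, n₀), H.mul (g₂, m₀))) := by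
          rw [← hpc_mul, ← hpc_mul, ← hpc_mul, hx]
        exact (Quotient.exact h' : Joined _ _)
  constructor
  · intro hI
    have hG : ∀ g₁ g₂ x : ZerothHomotopy P,
        ((∃ n ∈ N, ∃ m ∈ N, x = g₁ * n * (g₂ * m)) ↔ (g₁ * g₂)⁻¹ * x ∈ N) := by
      intro a b c
      refine Quotient.inductionOn₃ a b c fun g₁ g₂ p => ?_
      have hmem := Set.ext_iff.mp (hI g₁ g₂) p
      exact (hsat g₁ g₂ p).symm.trans (hmem.trans (hl (H.mul (g₁, g₂)) p))
    have hii := (grp_aux N h1 hmulN).mp hG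
    intro g
    ext p
    exact (hl g p).trans ((hii (pc g) (pc p)).trans (hr g p).symm)
  · intro hII
    have hii : ∀ g x : ZerothHomotopy P, g⁻¹ * x ∈ N ↔ x * g⁻¹ ∈ N := by
      intro a b
      refine Quotient.inductionOn₂ a b fun g p => ?_
      exact (hl g p).symm.trans ((Set.ext_iff.mp (hII g) p).trans (hr g p))
    have hG := (grp_aux N h1 hmulN).mpr hii
    intro g₁ g₂
    ext p
    show Jtn _ _ ↔ _
    exact (hsat g₁ g₂ p).trans ((hG (pc g₁) (pc g₂) (pc p)).trans (hl (H.mul (g₁, g₂)) p).symm)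
end

section
/- Second H-isomorphism theorem: if M and N are saturated sub-H-groups of an H-group P and N is normal in P, then the saturation of the product MN is a sub-H-group of P, and M/(M ∩ N) is isomorphic as a group to (saturation of MN)/N. -/
open ContinuousMap

universe u v

namespace Stmt13Aux
variable {P : Type u} [TopologicalSpace P]

lemma joined_map {X Y : Type*} [TopologicalSpace X] [TopologicalSpace Y]
    {f : X → Y} (hf : Continuous f) {x y : X} (h : Joined x y) : Joined (f x) (f y) :=
  ⟨h.somePath.map hf⟩

lemma joined_of_homotopicRel {X Y : Type*} [TopologicalSpace X] [TopologicalSpace Y]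
    {f g : C(X, Y)} {A : Set X} (h : ContinuousMap.HomotopicRel f g A) (x : X) :
    Joined (f x) (g x) := by
  obtain ⟨F⟩ := h
  exact ⟨⟨⟨fun t => F (t, x), by fun_prop⟩, by simp, by simp⟩⟩

lemma joined_homotopy_zero {X Y : Type*} [TopologicalSpace X] [TopologicalSpace Y]
    (F : C(unitInterval × X, Y)) (t : unitInterval) (x : X) :
    Joined (F (0, x)) (F (t, x)) := by
  refine ⟨⟨⟨fun s => F (⟨(s : ℝ) * (t : ℝ), unitInterval.mul_mem s.2 t.2⟩, x), by fun_prop⟩,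
    ?_, ?_⟩⟩
  · simp
  · simp

lemma homotopicRel_precomp {X Y Z : Type*} [TopologicalSpace X] [TopologicalSpace Y]
    [TopologicalSpace Z] {f g : C(Y, Z)} {A : Set Y}
    (h : ContinuousMap.HomotopicRel f g A) (k : C(X, Y))
    {B : Set X} (hB : ∀ x ∈ B, k x ∈ A) :
    ContinuousMap.HomotopicRel (f.comp k) (g.comp k) B := by
  obtain ⟨F⟩ := h
  exact ⟨{ toFun := fun p => F (p.1, k p.2), continuous_toFun := by fun_prop,
           map_zero_left := fun x => F.apply_zero _, map_one_left := fun x => F.apply_one _,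
           prop' := fun t x hx => F.prop t _ (hB x hx) }⟩

lemma homotopicRel_restrict {X : Type v} [TopologicalSpace X] {S : Set P} (hS : Saturated S)
    (f g : C(X, S)) (A : Set X) (f₀ g₀ : C(X, P))
    (hf : ∀ x, f₀ x = f x) (hg : ∀ x, g₀ x = g x)
    (h : ContinuousMap.HomotopicRel f₀ g₀ A) : ContinuousMap.HomotopicRel f g A := by
  obtain ⟨F⟩ := h
  refine ⟨{ toFun := fun p => ⟨F p, ?_⟩, continuous_toFun := ?_,
            map_zero_left := fun x => ?_, map_one_left := fun x => ?_,
            prop' := fun t x hx => ?_ }⟩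
  · refine hS (f₀ p.2) (by rw [hf]; exact (f p.2).2) _ ?_
    have := joined_homotopy_zero F.toContinuousMap p.1 p.2
    rwa [show F.toContinuousMap (0, p.2) = f₀ p.2 from F.apply_zero p.2] at this
  · fun_prop
  · exact Subtype.ext (by simpa [hf x] using F.apply_zero x)
  · exact Subtype.ext (by simpa [hg x] using F.apply_one x)
  · exact Subtype.ext (by simpa [hf x] using F.prop t x hx)

variable (H : HGroup P)

def structOf (S : Set P) (hS : Saturated S) (hpt : H.pt ∈ S)
    (hmul : ∀ a ∈ S, ∀ b ∈ S, H.mul (a, b) ∈ S) (hinv : ∀ a ∈ S, H.inv a ∈ S) :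
    HGroup S where
  pt := ⟨H.pt, hpt⟩
  mul := ⟨fun p => ⟨H.mul (p.1, p.2), hmul _ p.1.2 _ p.2.2⟩, by fun_prop⟩
  inv := ⟨fun x => ⟨H.inv x, hinv _ x.2⟩, by fun_prop⟩
  mul_pt := Subtype.ext H.mul_pt
  inv_pt := Subtype.ext H.inv_pt
  left_id := homotopicRel_restrict hS _ _ _ _ _ (fun x => rfl) (fun x => rfl)
      (homotopicRel_precomp H.left_id ⟨Subtype.val, by fun_prop⟩ (by rintro x rfl; rfl))
  right_id := homotopicRel_restrict hS _ _ _ _ _ (fun x => rfl) (fun x => rfl)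
      (homotopicRel_precomp H.right_id ⟨Subtype.val, by fun_prop⟩ (by rintro x rfl; rfl))
  left_inv := homotopicRel_restrict hS _ _ _ _ _ (fun x => rfl) (fun x => rfl)
      (homotopicRel_precomp H.left_inv ⟨Subtype.val, by fun_prop⟩ (by rintro x rfl; rfl))
  right_inv := homotopicRel_restrict hS _ _ _ _ _ (fun x => rfl) (fun x => rfl)
      (homotopicRel_precomp H.right_inv ⟨Subtype.val, by fun_prop⟩ (by rintro x rfl; rfl))
  assoc := homotopicRel_restrict hS _ _ _ _ _ (fun x => rfl) (fun x => rfl)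
      (homotopicRel_precomp H.assoc
        ⟨fun p => ((p.1 : P), (p.2.1 : P), (p.2.2 : P)), by fun_prop⟩ (by rintro x rfl; rfl))

def ofSaturated (S : Set P) (hS : Saturated S) (hpt : H.pt ∈ S)
    (hmul : ∀ a ∈ S, ∀ b ∈ S, H.mul (a, b) ∈ S) (hinv : ∀ a ∈ S, H.inv a ∈ S) :
    SubHGroup H where
  carrier := S
  struct := structOf H S hS hpt hmul hinv
  pt_val := rfl
  incl_mul := ⟨ContinuousMap.HomotopyRel.refl _ _⟩
  incl_inv := ⟨ContinuousMap.HomotopyRel.refl _ _⟩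

end Stmt13Aux
namespace Stmt13Aux
variable {P : Type u} [TopologicalSpace P] (H : HGroup P)

def Pi0 (_H : HGroup P) := ZerothHomotopy P

def pc0 : P → Pi0 H := pc

instance : Mul (Pi0 H) :=
  ⟨Quotient.map₂ (fun a b => H.mul (a, b))
    (fun _ _ ha _ _ hb => ⟨(ha.somePath.prod hb.somePath).map H.mul.continuous⟩)⟩

instance : One (Pi0 H) := ⟨pc0 H H.pt⟩

instance : Inv (Pi0 H) :=
  ⟨Quotient.map (fun a => H.inv a) (fun _ _ ha => joined_map H.inv.continuous ha)⟩

lemma pc0_mul (a b : P) : pc0 H (H.mul (a, b)) = pc0 H a * pc0 H b := rfl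
lemma pc0_inv (a : P) : pc0 H (H.inv a) = (pc0 H a)⁻¹ := rfl
lemma pc0_one : pc0 H H.pt = 1 := rfl

lemma pc0_surj : Function.Surjective (pc0 H) := fun x => Quotient.exists_rep x

lemma pc0_eq {a b : P} : pc0 H a = pc0 H b ↔ Joined a b := by
  constructor
  · exact fun h => Quotient.exact h
  · exact fun h => Quotient.sound (s := pathSetoid P) h

instance : Group (Pi0 H) :=
  Group.ofLeftAxioms
    (fun a b c => by
      obtain ⟨a, rfl⟩ := pc0_surj H a
      obtain ⟨b, rfl⟩ := pc0_surj H b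
      obtain ⟨c, rfl⟩ := pc0_surj H c
      rw [← pc0_mul, ← pc0_mul, ← pc0_mul, ← pc0_mul, pc0_eq]
      exact joined_of_homotopicRel H.assoc (a, b, c))
    (fun a => by
      obtain ⟨a, rfl⟩ := pc0_surj H a
      rw [← pc0_one, ← pc0_mul, pc0_eq]
      exact joined_of_homotopicRel H.left_id a)
    (fun a => by
      obtain ⟨a, rfl⟩ := pc0_surj H a
      rw [← pc0_inv, ← pc0_mul, ← pc0_one, pc0_eq]
      exact joined_of_homotopicRel H.left_inv a)

lemma pt_mem (M : SubHGroup H) : H.pt ∈ M.carrier := M.pt_val ▸ M.struct.pt.2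

lemma mem_mul (M : SubHGroup H) (hM : Saturated M.carrier) {a b : P}
    (ha : a ∈ M.carrier) (hb : b ∈ M.carrier) : H.mul (a, b) ∈ M.carrier :=
  hM _ (M.struct.mul (⟨a, ha⟩, ⟨b, hb⟩)).2 _
    (joined_of_homotopicRel M.incl_mul (⟨a, ha⟩, ⟨b, hb⟩))

lemma mem_inv (M : SubHGroup H) (hM : Saturated M.carrier) {a : P}
    (ha : a ∈ M.carrier) : H.inv a ∈ M.carrier :=
  hM _ (M.struct.inv ⟨a, ha⟩).2 _ (joined_of_homotopicRel M.incl_inv ⟨a, ha⟩)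

def sub (M : SubHGroup H) (hM : Saturated M.carrier) : Subgroup (Pi0 H) where
  carrier := pc0 H '' M.carrier
  one_mem' := ⟨H.pt, pt_mem H M, rfl⟩
  mul_mem' := by
    rintro _ _ ⟨a, ha, rfl⟩ ⟨b, hb, rfl⟩
    exact ⟨H.mul (a, b), mem_mul H M hM ha hb, rfl⟩
  inv_mem' := by
    rintro _ ⟨a, ha, rfl⟩
    exact ⟨H.inv a, mem_inv H M hM ha, rfl⟩

lemma mem_sub {M : SubHGroup H} {hM : Saturated M.carrier} {g : P} :
    pc0 H g ∈ sub H M hM ↔ g ∈ M.carrier := by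
  constructor
  · rintro ⟨a, ha, h⟩
    exact hM a ha g ((pc0_eq H).mp h)
  · exact fun h => ⟨g, h, rfl⟩

lemma jtn_iff {S : Set P} {g : P} : Jtn S g ↔ pc0 H g ∈ pc0 H '' S := by
  constructor
  · rintro ⟨s, hs, h⟩; exact ⟨s, hs, ((pc0_eq H).mpr h).symm⟩
  · rintro ⟨s, hs, h⟩; exact ⟨s, hs, (pc0_eq H).mp h.symm⟩

lemma cosetRel_iff {S : Set P} {a b : P} :
    cosetRel H S a b ↔ pc0 H a * (pc0 H b)⁻¹ ∈ pc0 H '' S := by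
  rw [cosetRel, jtn_iff H, pc0_mul, pc0_inv]

lemma sub_normal (N : SubHGroup H) (hNs : Saturated N.carrier) (hN : N.Normal) :
    (sub H N hNs).Normal := by
  constructor
  rintro _ ⟨n, hn, rfl⟩ g
  obtain ⟨g, rfl⟩ := pc0_surj H g
  rw [← pc0_inv, ← pc0_mul, ← pc0_mul]
  exact (mem_sub H).mpr ((jtn_iff H).mp (hN g n hn) |>.elim
    (fun s hs => hNs s hs.1 _ ((pc0_eq H).mp hs.2.symm).symm))

end Stmt13Aux
open Stmt13Aux Pointwise in
/-- Second H-isomorphism theorem: for saturated sub-H-groups `M`, `N` of `P` with `N`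
normal, the saturation `W` of `MN` is a sub-H-group of `P`, and `M/(M ∩ N)` is
isomorphic as a group to `W/N`. -/
theorem stmt_13 {P : Type u} [TopologicalSpace P] (H : HGroup P) (M N : SubHGroup H)
    (hM : Saturated M.carrier) (hNs : Saturated N.carrier) (hN : N.Normal)
    (W : Set P) (hW : W = {p : P | Jtn (H.mulSet M.carrier N.carrier) p}) :
    (∃ S : SubHGroup H, S.carrier = W) ∧
    ∀ mM : Quot (fun a b : ↥M.carrier => cosetRel H (M.carrier ∩ N.carrier) a b) →
        Quot (fun a b : ↥M.carrier => cosetRel H (M.carrier ∩ N.carrier) a b) →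
        Quot (fun a b : ↥M.carrier => cosetRel H (M.carrier ∩ N.carrier) a b),
      (∀ (a b : ↥M.carrier) (h : H.mul ((a : P), (b : P)) ∈ M.carrier),
        mM (Quot.mk _ a) (Quot.mk _ b) = Quot.mk _ (⟨H.mul ((a : P), (b : P)), h⟩ : ↥M.carrier)) →
      ∀ mW : Quot (fun a b : ↥W => cosetRel H N.carrier a b) →
          Quot (fun a b : ↥W => cosetRel H N.carrier a b) →
          Quot (fun a b : ↥W => cosetRel H N.carrier a b),
        (∀ (a b : ↥W) (h : H.mul ((a : P), (b : P)) ∈ W),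
          mW (Quot.mk _ a) (Quot.mk _ b) = Quot.mk _ (⟨H.mul ((a : P), (b : P)), h⟩ : ↥W)) →
        ∃ θ : Quot (fun a b : ↥M.carrier => cosetRel H (M.carrier ∩ N.carrier) a b) ≃
            Quot (fun a b : ↥W => cosetRel H N.carrier a b),
          (∀ (a : ↥M.carrier) (h : (a : P) ∈ W),
            θ (Quot.mk _ a) = Quot.mk _ (⟨(a : P), h⟩ : ↥W)) ∧
          ∀ a b, θ (mM a b) = mW (θ a) (θ b) := by
  classical
  set Msg := sub H M hM with hMsg
  set Nsg := sub H N hNs with hNsg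
  haveI hNn : Nsg.Normal := sub_normal H N hNs hN
  have himg : pc0 H '' H.mulSet M.carrier N.carrier = (Msg : Set (Pi0 H)) * (Nsg : Set (Pi0 H)) := by
    ext x
    rw [Set.mem_mul]
    constructor
    · rintro ⟨p, ⟨a, ha, b, hb, rfl⟩, rfl⟩
      exact ⟨pc0 H a, ⟨a, ha, rfl⟩, pc0 H b, ⟨b, hb, rfl⟩, (pc0_mul H a b).symm⟩
    · rintro ⟨x, hx, y, hy, hxy⟩
      obtain ⟨a, ha, rfl⟩ := hx
      obtain ⟨b, hb, rfl⟩ := hy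
      exact ⟨H.mul (a, b), ⟨a, ha, b, hb, rfl⟩, by rw [pc0_mul]; exact hxy⟩
  have memW : ∀ p : P, p ∈ W ↔ pc0 H p ∈ Msg ⊔ Nsg := by
    intro p
    rw [hW]
    show Jtn (H.mulSet M.carrier N.carrier) p ↔ _
    rw [jtn_iff H, himg, ← SetLike.mem_coe (p := Msg ⊔ Nsg), Subgroup.mul_normal Msg Nsg]
  have hWsat : Saturated W := by
    intro x hx y hxy
    rw [memW] at hx ⊢
    rwa [← (pc0_eq H).mpr hxy]
  have hWpt : H.pt ∈ W := (memW _).mpr (by rw [show pc0 H H.pt = 1 from rfl]; exact one_mem _)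
  have hWmul : ∀ a ∈ W, ∀ b ∈ W, H.mul (a, b) ∈ W := fun a ha b hb =>
    (memW _).mpr (by rw [pc0_mul]; exact mul_mem ((memW _).mp ha) ((memW _).mp hb))
  have hWinv : ∀ a ∈ W, H.inv a ∈ W := fun a ha =>
    (memW _).mpr (by rw [pc0_inv]; exact inv_mem ((memW _).mp ha))
  refine ⟨⟨ofSaturated H W hWsat hWpt hWmul hWinv, rfl⟩, ?_⟩
  intro mM hmM mW hmW
  have hMW : ∀ a ∈ M.carrier, a ∈ W := fun a ha =>
    (memW _).mpr ((le_sup_left : Msg ≤ Msg ⊔ Nsg) ((mem_sub H).mpr ha))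
  have hinter : ∀ x : Pi0 H, x ∈ pc0 H '' (M.carrier ∩ N.carrier) ↔ x ∈ Msg ∧ x ∈ Nsg := by
    intro x
    constructor
    · rintro ⟨a, ⟨haM, haN⟩, rfl⟩
      exact ⟨(mem_sub H).mpr haM, (mem_sub H).mpr haN⟩
    · rintro ⟨hxM, hxN⟩
      obtain ⟨a, haM, rfl⟩ := hxM
      exact ⟨a, ⟨haM, (mem_sub H).mp hxN⟩, rfl⟩
  have himgN : ∀ x : Pi0 H, x ∈ pc0 H '' N.carrier ↔ x ∈ Nsg :=
    fun x => ⟨fun h => h, fun h => h⟩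
  have exsel : ∀ w : ↥W, ∃ m : ↥M.carrier, pc0 H (w : P) * (pc0 H (m : P))⁻¹ ∈ Nsg := by
    intro w
    have hw := (memW _).mp w.2
    rw [← SetLike.mem_coe, Subgroup.mul_normal Msg Nsg, Set.mem_mul] at hw
    obtain ⟨x, hx, y, hy, hxy⟩ := hw
    obtain ⟨m, hm, rfl⟩ := hx
    refine ⟨⟨m, hm⟩, ?_⟩
    rw [show pc0 H (w : P) = pc0 H m * y from hxy.symm]
    exact hNn.conj_mem _ hy _
  choose sel hsel using exsel
  -- forward map
  set F : Quot (fun a b : ↥M.carrier => cosetRel H (M.carrier ∩ N.carrier) a b) →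
      Quot (fun a b : ↥W => cosetRel H N.carrier a b) :=
    Quot.lift (fun a : ↥M.carrier => Quot.mk _ (⟨(a : P), hMW _ a.2⟩ : ↥W))
      (fun a b hab => Quot.sound (by
        rcases hab with ⟨s, hs, hp⟩
        exact ⟨s, hs.2, hp⟩)) with hF
  -- inverse map
  set Ginv : Quot (fun a b : ↥W => cosetRel H N.carrier a b) →
      Quot (fun a b : ↥M.carrier => cosetRel H (M.carrier ∩ N.carrier) a b) :=
    Quot.lift (fun w : ↥W => Quot.mk _ (sel w))
      (fun w w' hww => Quot.sound (by
        rw [cosetRel_iff H]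
        rw [hinter]
        have hNmem : pc0 H (w : P) * (pc0 H (w' : P))⁻¹ ∈ Nsg := by
          rw [← himgN, ← pc0_inv, ← pc0_mul]
          exact (jtn_iff H).mp hww
        constructor
        · exact Subgroup.mul_mem _ ((mem_sub H).mpr (sel w).2)
            (Subgroup.inv_mem _ ((mem_sub H).mpr (sel w').2))
        · have key : pc0 H ((sel w : ↥M.carrier) : P) * (pc0 H ((sel w' : ↥M.carrier) : P))⁻¹ =
              (pc0 H (w : P) * (pc0 H ((sel w : ↥M.carrier) : P))⁻¹)⁻¹ *
                ((pc0 H (w : P) * (pc0 H (w' : P))⁻¹) *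
                  (pc0 H (w' : P) * (pc0 H ((sel w' : ↥M.carrier) : P))⁻¹)) := by
            group
          rw [key]
          exact Subgroup.mul_mem _ (Subgroup.inv_mem _ (hsel w))
            (Subgroup.mul_mem _ hNmem (hsel w')))) with hGinv
  have keyL : ∀ a : ↥M.carrier, Ginv (F (Quot.mk _ a)) = Quot.mk _ a := by
    intro a
    have hrel : cosetRel H (M.carrier ∩ N.carrier)
        ((sel ⟨(a : P), hMW _ a.2⟩ : ↥M.carrier) : P) (a : P) := by
      rw [cosetRel_iff H, hinter]
      have h1 := hsel ⟨(a : P), hMW _ a.2⟩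
      constructor
      · exact Subgroup.mul_mem _ ((mem_sub H).mpr (sel ⟨(a : P), hMW _ a.2⟩).2)
          (Subgroup.inv_mem _ ((mem_sub H).mpr a.2))
      · have key : pc0 H ((sel ⟨(a : P), hMW _ a.2⟩ : ↥M.carrier) : P) * (pc0 H (a : P))⁻¹ =
            (pc0 H (a : P) * (pc0 H ((sel ⟨(a : P), hMW _ a.2⟩ : ↥M.carrier) : P))⁻¹)⁻¹ := by
          group
        rw [key]
        exact Subgroup.inv_mem _ h1
    rw [hGinv, hF]
    exact Quot.sound (r := fun a b : ↥M.carrier => cosetRel H (M.carrier ∩ N.carrier) ↑a ↑b) hrel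
  have keyR : ∀ w : ↥W, F (Ginv (Quot.mk _ w)) = Quot.mk _ w := by
    intro w
    have hrel : cosetRel H N.carrier ((sel w : ↥M.carrier) : P) (w : P) := by
      rw [cosetRel_iff H, himgN]
      have key : pc0 H ((sel w : ↥M.carrier) : P) * (pc0 H (w : P))⁻¹ =
          (pc0 H (w : P) * (pc0 H ((sel w : ↥M.carrier) : P))⁻¹)⁻¹ := by group
      rw [key]
      exact Subgroup.inv_mem _ (hsel w)
    rw [hF, hGinv]
    exact Quot.sound (r := fun a b : ↥W => cosetRel H N.carrier ↑a ↑b) hrel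
  refine ⟨⟨F, Ginv, fun q => Quot.inductionOn q keyL, fun q => Quot.inductionOn q keyR⟩,
    ?_, ?_⟩
  · intro a h
    show F (Quot.mk _ a) = _
    rw [hF]
  intro a b
  induction a using Quot.inductionOn with | _ x => ?_
  induction b using Quot.inductionOn with | _ y => ?_
  show F (mM (Quot.mk _ x) (Quot.mk _ y)) = mW (F (Quot.mk _ x)) (F (Quot.mk _ y))
  rw [hmM x y (mem_mul H M hM x.2 y.2), hF]
  show Quot.mk _ (⟨H.mul ((x : P), (y : P)), hMW _ (mem_mul H M hM x.2 y.2)⟩ : ↥W) =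
    mW (Quot.mk _ (⟨(x : P), hMW _ x.2⟩ : ↥W)) (Quot.mk _ (⟨(y : P), hMW _ y.2⟩ : ↥W))
  rw [hmW _ _ (hWmul _ (hMW _ x.2) _ (hMW _ y.2))]
end

section
/- Let P be an H-group satisfying η∘μ ≃ μ∘(η×η)∘T, where T(x,y) = (y,x). Define HInn(P) as the set of homotopy classes [φ_a], a ∈ P, of inner H-automorphisms φ_a(g) = a·(g·a⁻¹). Then HInn(P) is a group under [φ_a][φ_b] = [φ_{a·b}], and it is isomorphic to P/Z(P), where Z(P) = { g ∈ P : μ(g,−) ≃ μ(−,g) } is the center of P. -/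
open ContinuousMap

universe u v

/-- The inner automorphism `φ_a(g) = a·(g·a⁻¹)`. -/
def phiA {P : Type u} [TopologicalSpace P] (H : HGroup P) (a : P) : C(P, P) :=
  ⟨fun g => H.mul (a, H.mul (g, H.inv a)), by fun_prop⟩

/-- The center of an H-group: points whose left and right translations are homotopic. -/
def center {P : Type u} [TopologicalSpace P] (H : HGroup P) : Set P :=
  {g : P | (⟨fun x => H.mul (g, x), by fun_prop⟩ : C(P, P)).Homotopic
    ⟨fun x => H.mul (x, g), by fun_prop⟩}

/-- `HInn P`: the homotopy classes of inner H-automorphisms. -/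
def HInn {P : Type u} [TopologicalSpace P] (H : HGroup P) :=
  Quot (fun a b : P => (phiA H a).Homotopic (phiA H b))

section Aux
variable {P : Type u} {X : Type v} [TopologicalSpace P] [TopologicalSpace X] (H : HGroup P)

lemma hrel_to_h {Y Z : Type*} [TopologicalSpace Y] [TopologicalSpace Z] {f g : C(Y,Z)} {S : Set Y}
    (h : HomotopicRel f g S) : f.Homotopic g := by
  obtain ⟨F⟩ := h; exact ⟨F.toHomotopy⟩

/-- pointwise product of maps into P -/
def hmul (f g : C(X, P)) : C(X, P) := H.mul.comp (f.prodMk g)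

lemma hmul_congr {f f' g g' : C(X,P)} (hf : f.Homotopic f') (hg : g.Homotopic g') :
    (hmul H f g).Homotopic (hmul H f' g') := by
  obtain ⟨F⟩ := hf; obtain ⟨G⟩ := hg
  exact ⟨ContinuousMap.Homotopy.comp (ContinuousMap.Homotopy.refl H.mul) (F.prodMk G)⟩

lemma joined_const {x y : P} (h : Joined x y) : (const X x).Homotopic (const X y) := by
  obtain ⟨p⟩ := h
  exact ⟨{ toFun := fun q => p q.1
           continuous_toFun := p.continuous.comp continuous_fst
           map_zero_left := fun _ => p.source
           map_one_left := fun _ => p.target }⟩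

lemma joined_of_homotopic {Y Z : Type*} [TopologicalSpace Y] [TopologicalSpace Z] {f g : C(Y,Z)}
    (h : f.Homotopic g) (y : Y) : Joined (f y) (g y) := by
  obtain ⟨F⟩ := h; exact ⟨F.evalAt y⟩

lemma joined_map_s17 {x y : P} (h : Joined x y) (f : C(P, P)) : Joined (f x) (f y) := by
  obtain ⟨p⟩ := h; exact ⟨p.map f.continuous⟩

lemma hmul_assoc (f g h : C(X,P)) :
    (hmul H (hmul H f g) h).Homotopic (hmul H f (hmul H g h)) := by
  have h1 := ContinuousMap.Homotopic.comp (hrel_to_h H.assoc) (ContinuousMap.Homotopic.refl (f.prodMk (g.prodMk h)))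
  have e1 : (⟨fun p : P × P × P => H.mul (H.mul (p.1, p.2.1), p.2.2), by fun_prop⟩ :
      C(P × P × P, P)).comp (f.prodMk (g.prodMk h)) = hmul H (hmul H f g) h :=
    ContinuousMap.ext fun _ => rfl
  have e2 : (⟨fun p : P × P × P => H.mul (p.1, H.mul (p.2.1, p.2.2)), by fun_prop⟩ :
      C(P × P × P, P)).comp (f.prodMk (g.prodMk h)) = hmul H f (hmul H g h) :=
    ContinuousMap.ext fun _ => rfl
  rwa [e1, e2] at h1

lemma hmul_pt_left (f : C(X,P)) : (hmul H (const X H.pt) f).Homotopic f := by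
  have h1 := ContinuousMap.Homotopic.comp (hrel_to_h H.left_id) (ContinuousMap.Homotopic.refl f)
  have e1 : (⟨fun g => H.mul (H.pt, g), by fun_prop⟩ : C(P,P)).comp f
      = hmul H (const X H.pt) f := ContinuousMap.ext fun _ => rfl
  have e2 : (ContinuousMap.id P).comp f = f := ContinuousMap.ext fun _ => rfl
  rwa [e1, e2] at h1

lemma hmul_pt_right (f : C(X,P)) : (hmul H f (const X H.pt)).Homotopic f := by
  have h1 := ContinuousMap.Homotopic.comp (hrel_to_h H.right_id) (ContinuousMap.Homotopic.refl f)
  have e1 : (⟨fun g => H.mul (g, H.pt), by fun_prop⟩ : C(P,P)).comp f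
      = hmul H f (const X H.pt) := ContinuousMap.ext fun _ => rfl
  have e2 : (ContinuousMap.id P).comp f = f := ContinuousMap.ext fun _ => rfl
  rwa [e1, e2] at h1

lemma const_hmul (x y : P) : hmul H (const X x) (const X y) = const X (H.mul (x, y)) :=
  ContinuousMap.ext fun _ => rfl

-- joined facts
lemma j_assoc (a b c : P) : Joined (H.mul (H.mul (a,b), c)) (H.mul (a, H.mul (b,c))) :=
  joined_of_homotopic (hrel_to_h H.assoc) (a, b, c)

lemma j_left_id (a : P) : Joined (H.mul (H.pt, a)) a :=
  joined_of_homotopic (hrel_to_h H.left_id) a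

lemma j_right_id (a : P) : Joined (H.mul (a, H.pt)) a :=
  joined_of_homotopic (hrel_to_h H.right_id) a

lemma j_left_inv (a : P) : Joined (H.mul (H.inv a, a)) H.pt :=
  joined_of_homotopic (hrel_to_h H.left_inv) a

lemma j_right_inv (a : P) : Joined (H.mul (a, H.inv a)) H.pt :=
  joined_of_homotopic (hrel_to_h H.right_inv) a

end Aux

section Phi
variable {P : Type u} [TopologicalSpace P] (H : HGroup P)

lemma phiA_eq (a : P) :
    phiA H a = hmul H (const P a) (hmul H (ContinuousMap.id P) (const P (H.inv a))) :=
  ContinuousMap.ext fun _ => rfl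

lemma joined_phi {a b : P} (h : Joined a b) : (phiA H a).Homotopic (phiA H b) := by
  rw [phiA_eq, phiA_eq]
  exact hmul_congr H (joined_const h)
    (hmul_congr H (ContinuousMap.Homotopic.refl _) (joined_const (joined_map_s17 h H.inv)))

lemma phi_mul (a b : P) (hT : (H.inv.comp H.mul).Homotopic
      (H.mul.comp ((H.inv.prodMap H.inv).comp ⟨Prod.swap, continuous_swap⟩))) :
    (phiA H (H.mul (a, b))).Homotopic ((phiA H a).comp (phiA H b)) := by
  set ca := const P a
  set cb := const P b
  set ca' := const P (H.inv a)
  set cb' := const P (H.inv b)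
  set Id := ContinuousMap.id P
  have jT : Joined (H.inv (H.mul (a, b))) (H.mul (H.inv b, H.inv a)) :=
    joined_of_homotopic hT (a, b)
  have e0 : phiA H (H.mul (a,b)) = hmul H (hmul H ca cb) (hmul H Id (const P (H.inv (H.mul (a,b))))) := ContinuousMap.ext fun _ => rfl
  have ecomp : (phiA H a).comp (phiA H b) = hmul H ca (hmul H (hmul H cb (hmul H Id cb')) ca') :=
    ContinuousMap.ext fun _ => rfl
  rw [e0, ecomp]
  have s1 : (hmul H (hmul H ca cb) (hmul H Id (const P (H.inv (H.mul (a,b)))))).Homotopic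
      (hmul H (hmul H ca cb) (hmul H Id (hmul H cb' ca'))) := by
    refine hmul_congr H (.refl _) (hmul_congr H (.refl _) ?_)
    rw [const_hmul]
    exact joined_const jT
  have s2 : (hmul H (hmul H ca cb) (hmul H Id (hmul H cb' ca'))).Homotopic
      (hmul H ca (hmul H cb (hmul H Id (hmul H cb' ca')))) := hmul_assoc H _ _ _
  have s3 : (hmul H ca (hmul H cb (hmul H Id (hmul H cb' ca')))).Homotopic
      (hmul H ca (hmul H cb (hmul H (hmul H Id cb') ca'))) :=
    hmul_congr H (.refl _) (hmul_congr H (.refl _) (hmul_assoc H _ _ _).symm)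
  have s4 : (hmul H ca (hmul H cb (hmul H (hmul H Id cb') ca'))).Homotopic
      (hmul H ca (hmul H (hmul H cb (hmul H Id cb')) ca')) :=
    hmul_congr H (.refl _) (hmul_assoc H _ _ _).symm
  exact ((s1.trans s2).trans s3).trans s4

lemma phi_pt : (phiA H H.pt).Homotopic (ContinuousMap.id P) := by
  have e : phiA H H.pt
      = hmul H (const P H.pt) (hmul H (ContinuousMap.id P) (const P H.pt)) := by
    rw [phiA_eq, H.inv_pt]
  rw [e]
  exact (hmul_pt_left H _).trans (hmul_pt_right H _)

lemma phi_id_comp (f : C(P,P)) : (ContinuousMap.id P).comp f = f := ContinuousMap.ext fun _ => rfl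

/-- If s is in the center then φ_s ≃ id. -/
lemma center_phi {s : P} (hs : s ∈ center H) : (phiA H s).Homotopic (ContinuousMap.id P) := by
  set cs := const P s
  set cs' := const P (H.inv s)
  set Id := ContinuousMap.id P
  have hLR : (⟨fun x => H.mul (s, x), by fun_prop⟩ : C(P, P)).Homotopic
      ⟨fun x => H.mul (x, s), by fun_prop⟩ := hs
  have h1 := ContinuousMap.Homotopic.comp hLR (ContinuousMap.Homotopic.refl (hmul H Id cs'))
  have e1 : (⟨fun x => H.mul (s, x), by fun_prop⟩ : C(P, P)).comp (hmul H Id cs')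
      = phiA H s := ContinuousMap.ext fun _ => rfl
  have e2 : (⟨fun x => H.mul (x, s), by fun_prop⟩ : C(P, P)).comp (hmul H Id cs')
      = hmul H (hmul H Id cs') cs := ContinuousMap.ext fun _ => rfl
  rw [e1, e2] at h1
  have h2 : (hmul H (hmul H Id cs') cs).Homotopic (hmul H Id (hmul H cs' cs)) :=
    hmul_assoc H _ _ _
  have h3 : (hmul H Id (hmul H cs' cs)).Homotopic (hmul H Id (const P H.pt)) := by
    refine hmul_congr H (.refl _) ?_
    rw [const_hmul]
    exact joined_const (j_left_inv H s)
  exact ((h1.trans h2).trans h3).trans (hmul_pt_right H _)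

/-- If φ_c ≃ id then c is in the center. -/
lemma phi_center {c : P} (hc : (phiA H c).Homotopic (ContinuousMap.id P)) : c ∈ center H := by
  set cc := const P c
  set cc' := const P (H.inv c)
  set Id := ContinuousMap.id P
  have h1 := (hmul_congr H hc (ContinuousMap.Homotopic.refl cc))
  -- h1 : hmul (phiA c) cc ≃ hmul Id cc
  have e0 : hmul H (phiA H c) cc = hmul H (hmul H cc (hmul H Id cc')) cc :=
    ContinuousMap.ext fun _ => rfl
  rw [e0] at h1
  have h2 : (hmul H cc Id).Homotopic (hmul H (hmul H cc (hmul H Id cc')) cc) := by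
    have a1 : (hmul H (hmul H cc (hmul H Id cc')) cc).Homotopic
        (hmul H cc (hmul H (hmul H Id cc') cc)) := hmul_assoc H _ _ _
    have a2 : (hmul H cc (hmul H (hmul H Id cc') cc)).Homotopic
        (hmul H cc (hmul H Id (hmul H cc' cc))) :=
      hmul_congr H (.refl _) (hmul_assoc H _ _ _)
    have a3 : (hmul H cc (hmul H Id (hmul H cc' cc))).Homotopic
        (hmul H cc (hmul H Id (const P H.pt))) := by
      refine hmul_congr H (.refl _) (hmul_congr H (.refl _) ?_)
      rw [const_hmul]
      exact joined_const (j_left_inv H c)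
    have a4 : (hmul H cc (hmul H Id (const P H.pt))).Homotopic (hmul H cc Id) :=
      hmul_congr H (.refl _) (hmul_pt_right H _)
    exact (((a1.trans a2).trans a3).trans a4).symm
  have h3 := h2.trans h1
  -- h3 : hmul cc Id ≃ hmul Id cc, i.e. L_c ≃ R_c
  have eL : (⟨fun x => H.mul (c, x), by fun_prop⟩ : C(P, P)) = hmul H cc Id :=
    ContinuousMap.ext fun _ => rfl
  have eR : (⟨fun x => H.mul (x, c), by fun_prop⟩ : C(P, P)) = hmul H Id cc :=
    ContinuousMap.ext fun _ => rfl
  show _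
  rw [center, Set.mem_setOf_eq, eL, eR]
  exact h3

end Phi


section Main
variable {P : Type u} [TopologicalSpace P] (H : HGroup P)

variable (hT : (H.inv.comp H.mul).Homotopic
      (H.mul.comp ((H.inv.prodMap H.inv).comp ⟨Prod.swap, continuous_swap⟩)))

include hT

/-- φ_b ∘ φ_{b⁻¹} ≃ id -/
lemma phi_inv_right (b : P) :
    ((phiA H b).comp (phiA H (H.inv b))).Homotopic (ContinuousMap.id P) :=
  ((phi_mul H b (H.inv b) hT).symm.trans (joined_phi H (j_right_inv H b))).trans (phi_pt H)

/-- φ_{a⁻¹} ∘ φ_a ≃ id -/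
lemma phi_inv_left (a : P) :
    ((phiA H (H.inv a)).comp (phiA H a)).Homotopic (ContinuousMap.id P) :=
  ((phi_mul H (H.inv a) a hT).symm.trans (joined_phi H (j_left_inv H a))).trans (phi_pt H)

lemma phi_inv_wd {a b : P} (hab : (phiA H a).Homotopic (phiA H b)) :
    (phiA H (H.inv a)).Homotopic (phiA H (H.inv b)) := by
  have h1 : (phiA H (H.inv a)).Homotopic
      ((phiA H (H.inv a)).comp ((phiA H b).comp (phiA H (H.inv b)))) := by
    have := ContinuousMap.Homotopic.comp (ContinuousMap.Homotopic.refl (phiA H (H.inv a))) (phi_inv_right H hT b)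
    rw [ContinuousMap.comp_id] at this
    exact this.symm
  have h2 : ((phiA H (H.inv a)).comp ((phiA H b).comp (phiA H (H.inv b)))) =
      (((phiA H (H.inv a)).comp (phiA H b)).comp (phiA H (H.inv b))) :=
    ContinuousMap.ext fun _ => rfl
  have h3 : (((phiA H (H.inv a)).comp (phiA H b)).comp (phiA H (H.inv b))).Homotopic
      (((phiA H (H.inv a)).comp (phiA H a)).comp (phiA H (H.inv b))) :=
    ContinuousMap.Homotopic.comp (ContinuousMap.Homotopic.comp (ContinuousMap.Homotopic.refl _) hab.symm) (ContinuousMap.Homotopic.refl _)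
  have h4 : (((phiA H (H.inv a)).comp (phiA H a)).comp (phiA H (H.inv b))).Homotopic
      ((ContinuousMap.id P).comp (phiA H (H.inv b))) :=
    ContinuousMap.Homotopic.comp (phi_inv_left H hT a) (ContinuousMap.Homotopic.refl _)
  rw [phi_id_comp] at h4
  exact ((h1.trans (h2 ▸ ContinuousMap.Homotopic.refl _)).trans h3).trans h4

lemma phi_to_coset {a b : P} (hab : (phiA H a).Homotopic (phiA H b)) :
    cosetRel H (center H) a b := by
  set c := H.mul (a, H.inv b)
  have hc : (phiA H c).Homotopic (ContinuousMap.id P) := by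
    have h1 : (phiA H c).Homotopic ((phiA H a).comp (phiA H (H.inv b))) :=
      phi_mul H a (H.inv b) hT
    have h2 : ((phiA H a).comp (phiA H (H.inv b))).Homotopic
        ((phiA H b).comp (phiA H (H.inv b))) :=
      ContinuousMap.Homotopic.comp hab (ContinuousMap.Homotopic.refl _)
    exact (h1.trans h2).trans (phi_inv_right H hT b)
  exact ⟨c, phi_center H hc, Joined.refl c⟩

lemma coset_to_phi {a b : P} (h : cosetRel H (center H) a b) :
    (phiA H a).Homotopic (phiA H b) := by
  obtain ⟨s, hs, hjs⟩ := h
  have ja : Joined a (H.mul (s, b)) := by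
    have j1 : Joined a (H.mul (a, H.pt)) := (j_right_id H a).symm
    have j2 : Joined (H.mul (a, H.pt)) (H.mul (a, H.mul (H.inv b, b))) :=
      joined_map_s17 (j_left_inv H b).symm ⟨fun x => H.mul (a, x), by fun_prop⟩
    have j3 : Joined (H.mul (a, H.mul (H.inv b, b))) (H.mul (H.mul (a, H.inv b), b)) :=
      (j_assoc H a (H.inv b) b).symm
    have j4 : Joined (H.mul (H.mul (a, H.inv b), b)) (H.mul (s, b)) :=
      joined_map_s17 hjs ⟨fun x => H.mul (x, b), by fun_prop⟩
    exact ((j1.trans j2).trans j3).trans j4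
  have h1 : (phiA H a).Homotopic ((phiA H s).comp (phiA H b)) :=
    (joined_phi H ja).trans (phi_mul H s b hT)
  have h2 : ((phiA H s).comp (phiA H b)).Homotopic ((ContinuousMap.id P).comp (phiA H b)) :=
    ContinuousMap.Homotopic.comp (center_phi H hs) (ContinuousMap.Homotopic.refl _)
  rw [phi_id_comp] at h2
  exact h1.trans h2

/-- Multiplication on HInn. -/
def hinnMul : HInn H → HInn H → HInn H :=
  Quot.lift
    (fun a => Quot.lift (fun b => Quot.mk _ (H.mul (a, b)))
      (fun b b' hb => Quot.sound
        (((phi_mul H a b hT).trans (ContinuousMap.Homotopic.comp (ContinuousMap.Homotopic.refl _) hb)).trans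
          (phi_mul H a b' hT).symm)))
    (fun a a' ha => funext (fun y => by
      induction y using Quot.ind with | _ b =>
      exact Quot.sound
        (((phi_mul H a b hT).trans (ContinuousMap.Homotopic.comp ha (ContinuousMap.Homotopic.refl _))).trans
          (phi_mul H a' b hT).symm)))

end Main

/-- If `η∘μ ≃ μ∘(η×η)∘T`, then `HInn(P)` is a group under `[φ_a][φ_b] = [φ_{a·b}]`,
isomorphic to `P/Z(P)`. -/
theorem stmt_17 {P : Type u} [TopologicalSpace P] (H : HGroup P)
    (hT : (H.inv.comp H.mul).Homotopic
      (H.mul.comp ((H.inv.prodMap H.inv).comp ⟨Prod.swap, continuous_swap⟩)))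
    (mZ : Quot (cosetRel H (center H)) → Quot (cosetRel H (center H)) →
      Quot (cosetRel H (center H)))
    (hmZ : ∀ g h : P, mZ (Quot.mk _ g) (Quot.mk _ h) = Quot.mk _ (H.mul (g, h))) :
    ∃ m : HInn H → HInn H → HInn H,
      (∀ a b : P, m (Quot.mk _ a) (Quot.mk _ b) = Quot.mk _ (H.mul (a, b))) ∧
      (∀ x y z, m (m x y) z = m x (m y z)) ∧
      (∀ x, m (Quot.mk _ H.pt) x = x) ∧
      (∀ x, m x (Quot.mk _ H.pt) = x) ∧
      (∃ i : HInn H → HInn H,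
        (∀ a : P, i (Quot.mk _ a) = Quot.mk _ (H.inv a)) ∧
        ∀ x, m (i x) x = Quot.mk _ H.pt ∧ m x (i x) = Quot.mk _ H.pt) ∧
      ∃ θ : Quot (cosetRel H (center H)) ≃ HInn H,
        (∀ a : P, θ (Quot.mk _ a) = Quot.mk _ a) ∧
        ∀ x y, θ (mZ x y) = m (θ x) (θ y) := by
  classical
  refine ⟨hinnMul H hT, fun a b => rfl, ?_, ?_, ?_, ?_, ?_⟩
  · intro x y z
    induction x using Quot.ind with | _ a =>
    induction y using Quot.ind with | _ b =>
    induction z using Quot.ind with | _ c =>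
    exact Quot.sound (joined_phi H (j_assoc H a b c))
  · intro x
    induction x using Quot.ind with | _ a =>
    exact Quot.sound (joined_phi H (j_left_id H a))
  · intro x
    induction x using Quot.ind with | _ a =>
    exact Quot.sound (joined_phi H (j_right_id H a))
  · refine ⟨Quot.lift (fun a => Quot.mk _ (H.inv a))
      (fun a b hab => Quot.sound (phi_inv_wd H hT hab)), fun a => rfl, ?_⟩
    intro x
    induction x using Quot.ind with | _ a =>
    exact ⟨Quot.sound (joined_phi H (j_left_inv H a)),
      Quot.sound (joined_phi H (j_right_inv H a))⟩
  · refine ⟨⟨Quot.lift (fun a => Quot.mk _ a)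
        (fun a b h => Quot.sound (coset_to_phi H hT h)),
      Quot.lift (fun a => Quot.mk _ a)
        (fun a b h => Quot.sound (phi_to_coset H hT h)), ?_, ?_⟩, fun a => rfl, ?_⟩
    · intro x
      induction x using Quot.ind with | _ a =>
      rfl
    · intro x
      induction x using Quot.ind with | _ a =>
      rfl
    · intro x y
      induction x using Quot.ind with | _ a =>
      induction y using Quot.ind with | _ b =>
      rw [hmZ a b]
      rfl
end
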